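/- Let erfc(z) = (2/√π) ∫_z^∞ e^{−u²} du be the complementary error function and define Ξ(ξ) = ∫_ξ^∞ erfc(u) du. Then for every ξ ≥ 0: Ξ(ξ) = (1/√π) ∫_0^1 e^{−ξ²/u²} du. -/

import Mathlib

open Real MeasureTheory

/-- The complementary error function `erfc(z) = (2/√π) ∫_z^∞ e^{−u²} du`. -/
noncomputable def erfc (z : ℝ) : ℝ := (2 / Real.sqrt π) * ∫ u in Set.Ioi z, Real.exp (-u ^ 2)

/-- `Ξ(ξ) = ∫_ξ^∞ erfc(u) du`. -/
noncomputable def Xi (ξ : ℝ) : ℝ := ∫ u in Set.Ioi ξ, erfc u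

open Set Filter Topology

-- basic integrability
lemma gauss_integrable : Integrable (fun u : ℝ => Real.exp (-u ^ 2)) := by
  simpa using integrable_exp_neg_mul_sq (one_pos)

lemma gauss_split (t : ℝ) :
    (∫ u in Ioi t, Real.exp (-u ^ 2)) =
      (∫ u in Ioi (0:ℝ), Real.exp (-u ^ 2)) - ∫ u in (0:ℝ)..t, Real.exp (-u ^ 2) := by
  rcases le_total (0:ℝ) t with h | h
  · rw [intervalIntegral.integral_of_le h]
    have := setIntegral_union (Set.Ioc_disjoint_Ioi le_rfl) measurableSet_Ioi
      (gauss_integrable.integrableOn (s := Ioc 0 t)) (gauss_integrable.integrableOn (s := Ioi t))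
    rw [Set.Ioc_union_Ioi_eq_Ioi h] at this
    rw [this]; ring
  · rw [intervalIntegral.integral_of_ge h]
    have := setIntegral_union (Set.Ioc_disjoint_Ioi le_rfl) measurableSet_Ioi
      (gauss_integrable.integrableOn (s := Ioc t 0)) (gauss_integrable.integrableOn (s := Ioi 0))
    rw [Set.Ioc_union_Ioi_eq_Ioi h] at this
    rw [this]; ring

lemma T_hasDerivAt (t : ℝ) :
    HasDerivAt (fun x => ∫ u in Ioi x, Real.exp (-u ^ 2)) (-(Real.exp (-t ^ 2))) t := by
  have hcont : Continuous fun u : ℝ => Real.exp (-u ^ 2) := by continuity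
  have h := intervalIntegral.integral_hasDerivAt_right
    (gauss_integrable.intervalIntegrable (a := 0) (b := t))
    (hcont.stronglyMeasurableAtFilter _ _) hcont.continuousAt
  have h2 := h.const_sub (∫ u in Ioi (0:ℝ), Real.exp (-u ^ 2))
  refine HasDerivAt.congr_of_eventuallyEq h2 ?_
  filter_upwards with x using (gauss_split x)

lemma T_tendsto : Tendsto (fun x => ∫ u in Ioi x, Real.exp (-u ^ 2)) atTop (𝓝 0) := by
  have h := intervalIntegral_tendsto_integral_Ioi 0 (gauss_integrable.integrableOn) tendsto_id
  have h2 := (tendsto_const_nhds (x := ∫ u in Ioi (0:ℝ), Real.exp (-u ^ 2))).sub h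
  rw [sub_self] at h2
  exact h2.congr fun x => (gauss_split x).symm

lemma T_nonneg (t : ℝ) : 0 ≤ ∫ u in Ioi t, Real.exp (-u ^ 2) :=
  setIntegral_nonneg measurableSet_Ioi fun u _ => (Real.exp_pos _).le

lemma T_le (t : ℝ) (ht : 0 ≤ t) :
    (∫ u in Ioi t, Real.exp (-u ^ 2)) ≤ Real.sqrt π * Real.exp (-t ^ 2) := by
  have hmaj : Integrable (fun u : ℝ => Real.exp (-t ^ 2) * Real.exp (-(u - t) ^ 2)) :=
    (gauss_integrable.comp_sub_right t).const_mul _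
  have h1 : (∫ u in Ioi t, Real.exp (-u ^ 2))
      ≤ ∫ u in Ioi t, Real.exp (-t ^ 2) * Real.exp (-(u - t) ^ 2) := by
    refine setIntegral_mono_on (gauss_integrable.integrableOn) (hmaj.integrableOn)
      measurableSet_Ioi fun u hu => ?_
    rw [← Real.exp_add]
    apply Real.exp_le_exp.2
    nlinarith [Set.mem_Ioi.1 hu]
  have h2 : (∫ u in Ioi t, Real.exp (-t ^ 2) * Real.exp (-(u - t) ^ 2))
      ≤ ∫ u : ℝ, Real.exp (-t ^ 2) * Real.exp (-(u - t) ^ 2) := by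
    refine setIntegral_le_integral hmaj ?_
    filter_upwards with u using mul_nonneg (Real.exp_pos _).le (Real.exp_pos _).le
  have h3 : (∫ u : ℝ, Real.exp (-t ^ 2) * Real.exp (-(u - t) ^ 2))
      = Real.exp (-t ^ 2) * Real.sqrt π := by
    rw [MeasureTheory.integral_const_mul]
    have : (∫ u : ℝ, Real.exp (-(u - t) ^ 2)) = ∫ u : ℝ, Real.exp (-u ^ 2) :=
      integral_sub_right_eq_self (fun u : ℝ => Real.exp (-u ^ 2)) t
    rw [this]
    have := integral_gaussian 1
    simp only [neg_mul, one_mul] at this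
    rw [this, div_one]
  linarith [h1, h2.trans_eq h3]

lemma erfc_eq (t : ℝ) : erfc t = (2 / Real.sqrt π) * ∫ u in Ioi t, Real.exp (-u ^ 2) := rfl

lemma erfc_nonneg (t : ℝ) : 0 ≤ erfc t :=
  mul_nonneg (div_nonneg (by norm_num) (Real.sqrt_nonneg _)) (T_nonneg t)

lemma erfc_le (t : ℝ) (ht : 0 ≤ t) : erfc t ≤ 2 * Real.exp (-t ^ 2) := by
  have hπ : 0 < Real.sqrt π := Real.sqrt_pos.2 Real.pi_pos
  have := T_le t ht
  rw [erfc_eq]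
  calc (2 / Real.sqrt π) * ∫ u in Ioi t, Real.exp (-u ^ 2)
      ≤ (2 / Real.sqrt π) * (Real.sqrt π * Real.exp (-t ^ 2)) := by
        apply mul_le_mul_of_nonneg_left this (by positivity)
    _ = 2 * Real.exp (-t ^ 2) := by field_simp
  
lemma erfc_hasDerivAt (t : ℝ) :
    HasDerivAt erfc ((2 / Real.sqrt π) * (-(Real.exp (-t ^ 2)))) t :=
  (T_hasDerivAt t).const_mul (2 / Real.sqrt π)

lemma erfc_continuous : Continuous erfc :=
  continuous_iff_continuousAt.2 fun t => (erfc_hasDerivAt t).continuousAt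

lemma erfc_integrableOn (ξ : ℝ) (hξ : 0 ≤ ξ) : IntegrableOn erfc (Ioi ξ) := by
  refine Integrable.mono' ((gauss_integrable.const_mul 2).integrableOn)
    erfc_continuous.aestronglyMeasurable.restrict ?_
  rw [ae_restrict_iff' measurableSet_Ioi]
  filter_upwards with t ht
  rw [Real.norm_eq_abs, abs_of_nonneg (erfc_nonneg t)]
  exact erfc_le t (hξ.trans (le_of_lt ht))

-- E and its properties
lemma E_hasDerivAt (t : ℝ) :
    HasDerivAt (fun t => t * erfc t - (1 / Real.sqrt π) * Real.exp (-t ^ 2)) (erfc t) t := by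
  have h1 : HasDerivAt (fun t : ℝ => t * erfc t)
      (1 * erfc t + t * ((2 / Real.sqrt π) * (-(Real.exp (-t ^ 2))))) t :=
    (hasDerivAt_id t).mul (erfc_hasDerivAt t)
  have hin : HasDerivAt (fun t : ℝ => -t ^ 2) (-(2 * t)) t := by
    simpa using (hasDerivAt_pow 2 t).fun_neg
  have h2 : HasDerivAt (fun t : ℝ => (1 / Real.sqrt π) * Real.exp (-t ^ 2))
      ((1 / Real.sqrt π) * (Real.exp (-t ^ 2) * (-(2 * t)))) t :=
    (hin.exp).const_mul _
  have := h1.sub h2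
  refine this.congr_deriv ?_
  ring

lemma tendsto_mul_exp_neg_sq : Tendsto (fun t : ℝ => t * Real.exp (-t ^ 2)) atTop (𝓝 0) := by
  have hexp : Tendsto (fun t : ℝ => Real.exp (t - t ^ 2)) atTop (𝓝 0) := by
    apply Real.tendsto_exp_atBot.comp
    have h1 : Tendsto (fun t : ℝ => t * (t - 1)) atTop atTop :=
      tendsto_id.atTop_mul_atTop₀ (tendsto_atTop_add_const_right _ (-1) tendsto_id)
    have h2 : Tendsto (fun t : ℝ => -(t * (t - 1))) atTop atBot := by
      rwa [tendsto_neg_atBot_iff]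
    exact h2.congr fun t => by ring
  refine squeeze_zero' ?_ ?_ hexp
  · filter_upwards [eventually_ge_atTop (0:ℝ)] with t ht
    exact mul_nonneg ht (Real.exp_pos _).le
  · filter_upwards [eventually_ge_atTop (0:ℝ)] with t ht
    have : t ≤ Real.exp t := by linarith [Real.add_one_le_exp t]
    calc t * Real.exp (-t ^ 2) ≤ Real.exp t * Real.exp (-t ^ 2) :=
          mul_le_mul_of_nonneg_right this (Real.exp_pos _).le
      _ = Real.exp (t - t ^ 2) := by rw [← Real.exp_add]; ring_nf

lemma exp_neg_sq_tendsto : Tendsto (fun t : ℝ => Real.exp (-t ^ 2)) atTop (𝓝 0) := by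
  apply Real.tendsto_exp_atBot.comp
  rw [tendsto_neg_atBot_iff]
  exact tendsto_pow_atTop two_ne_zero

lemma E_tendsto :
    Tendsto (fun t => t * erfc t - (1 / Real.sqrt π) * Real.exp (-t ^ 2)) atTop (𝓝 0) := by
  have hmaj : Tendsto (fun t : ℝ => 2 * (t * Real.exp (-t ^ 2))) atTop (𝓝 0) := by
    simpa using tendsto_mul_exp_neg_sq.const_mul 2
  have h1 : Tendsto (fun t : ℝ => t * erfc t) atTop (𝓝 0) := by
    refine squeeze_zero' ?_ ?_ hmaj
    · filter_upwards [eventually_ge_atTop (0:ℝ)] with t ht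
      exact mul_nonneg ht (erfc_nonneg t)
    · filter_upwards [eventually_ge_atTop (0:ℝ)] with t ht
      have := erfc_le t ht
      calc t * erfc t ≤ t * (2 * Real.exp (-t ^ 2)) :=
            mul_le_mul_of_nonneg_left this ht
        _ = 2 * (t * Real.exp (-t ^ 2)) := by ring
  have h2 : Tendsto (fun t : ℝ => (1 / Real.sqrt π) * Real.exp (-t ^ 2)) atTop (𝓝 0) := by
    simpa using exp_neg_sq_tendsto.const_mul (1 / Real.sqrt π)
  simpa using h1.sub h2

-- Step A
lemma Xi_closed_form (ξ : ℝ) (hξ : 0 ≤ ξ) :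
    (∫ u in Ioi ξ, erfc u) = (1 / Real.sqrt π) * Real.exp (-ξ ^ 2) - ξ * erfc ξ := by
  have := integral_Ioi_of_hasDerivAt_of_tendsto' (a := ξ)
    (f := fun t => t * erfc t - (1 / Real.sqrt π) * Real.exp (-t ^ 2))
    (f' := erfc) (fun x _ => E_hasDerivAt x) (erfc_integrableOn ξ hξ) E_tendsto
  rw [this]; ring

-- Step B
lemma G_hasDerivAt (ξ : ℝ) (u : ℝ) (hu : 0 < u) :
    HasDerivAt (fun u => u * Real.exp (-ξ ^ 2 / u ^ 2)
      - 2 * ξ * ∫ t in Ioi (ξ / u), Real.exp (-t ^ 2)) (Real.exp (-ξ ^ 2 / u ^ 2)) u := by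
  have hu0 : u ≠ 0 := hu.ne'
  have hu2 : HasDerivAt (fun u : ℝ => u ^ 2) (2 * u) u := by simpa using hasDerivAt_pow 2 u
  have hd1 : HasDerivAt (fun u : ℝ => -ξ ^ 2 / u ^ 2)
      ((0 * u ^ 2 - -ξ ^ 2 * (2 * u)) / (u ^ 2) ^ 2) u :=
    (hasDerivAt_const u (-ξ ^ 2)).div hu2 (by positivity)
  have h1 : HasDerivAt (fun u : ℝ => u * Real.exp (-ξ ^ 2 / u ^ 2))
      (1 * Real.exp (-ξ ^ 2 / u ^ 2) +
        u * (Real.exp (-ξ ^ 2 / u ^ 2) * ((0 * u ^ 2 - -ξ ^ 2 * (2 * u)) / (u ^ 2) ^ 2))) u :=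
    (hasDerivAt_id u).mul hd1.exp
  have hinner : HasDerivAt (fun u : ℝ => ξ / u) ((0 * u - ξ * 1) / u ^ 2) u :=
    (hasDerivAt_const u ξ).div (hasDerivAt_id u) hu0
  have hcomp : HasDerivAt (fun u : ℝ => ∫ t in Ioi (ξ / u), Real.exp (-t ^ 2))
      (-(Real.exp (-(ξ / u) ^ 2)) * ((0 * u - ξ * 1) / u ^ 2)) u :=
    (T_hasDerivAt (ξ / u)).comp u hinner
  have h2 := hcomp.const_mul (2 * ξ)
  have := h1.sub h2
  refine this.congr_deriv ?_
  have hsq : -(ξ / u) ^ 2 = -ξ ^ 2 / u ^ 2 := by rw [div_pow, neg_div]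
  rw [hsq]
  field_simp
  ring

lemma G_tendsto (ξ : ℝ) (hξ : 0 < ξ) :
    Tendsto (fun u => u * Real.exp (-ξ ^ 2 / u ^ 2)
      - 2 * ξ * ∫ t in Ioi (ξ / u), Real.exp (-t ^ 2)) (𝓝[>] (0:ℝ)) (𝓝 0) := by
  have t1 : Tendsto (fun u : ℝ => u * Real.exp (-ξ ^ 2 / u ^ 2)) (𝓝[>] (0:ℝ)) (𝓝 0) := by
    refine squeeze_zero' ?_ ?_ (tendsto_id.mono_left nhdsWithin_le_nhds)
    · filter_upwards [self_mem_nhdsWithin] with u hu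
      exact mul_nonneg (le_of_lt hu) (Real.exp_pos _).le
    · filter_upwards [self_mem_nhdsWithin] with u hu
      have hle : Real.exp (-ξ ^ 2 / u ^ 2) ≤ 1 := by
        rw [Real.exp_le_one_iff]
        exact div_nonpos_of_nonpos_of_nonneg (neg_nonpos.2 (sq_nonneg _)) (sq_nonneg _)
      simpa using mul_le_of_le_one_right (le_of_lt hu) hle
  have t2 : Tendsto (fun u : ℝ => ξ / u) (𝓝[>] (0:ℝ)) atTop := by
    have := tendsto_inv_nhdsGT_zero.const_mul_atTop hξ
    exact this.congr fun u => (div_eq_mul_inv ξ u).symm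
  have t3 := (T_tendsto.comp t2).const_mul (2 * ξ)
  rw [mul_zero] at t3
  simpa using t1.sub t3

lemma stepB (ξ : ℝ) (hξ : 0 < ξ) :
    (∫ u in (0:ℝ)..1, Real.exp (-ξ ^ 2 / u ^ 2)) =
      Real.exp (-ξ ^ 2) - 2 * ξ * ∫ t in Ioi ξ, Real.exp (-t ^ 2) := by
  set f : ℝ → ℝ := fun u => Real.exp (-ξ ^ 2 / u ^ 2) with hf
  set G : ℝ → ℝ := fun u => u * Real.exp (-ξ ^ 2 / u ^ 2)
      - 2 * ξ * ∫ t in Ioi (ξ / u), Real.exp (-t ^ 2) with hG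
  have hmeas : Measurable f := (Real.measurable_exp.comp
    (measurable_const.div ((measurable_id.pow_const 2))))
  have hbound : ∀ u : ℝ, ‖f u‖ ≤ 1 := by
    intro u
    rw [Real.norm_eq_abs, abs_of_nonneg (Real.exp_pos _).le, Real.exp_le_one_iff]
    exact div_nonpos_of_nonpos_of_nonneg (neg_nonpos.2 (sq_nonneg _)) (sq_nonneg _)
  have hInt : ∀ a b : ℝ, IntervalIntegrable f volume a b := by
    intro a b
    rw [intervalIntegrable_iff]
    exact Measure.integrableOn_of_bounded measure_Ioc_lt_top.ne
      hmeas.aestronglyMeasurable (ae_of_all _ hbound)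
  have hFTC : ∀ ε ∈ Ioo (0:ℝ) 1, (∫ u in ε..1, f u) = G 1 - G ε := by
    intro ε hε
    refine intervalIntegral.integral_eq_sub_of_hasDerivAt (fun x hx => ?_) (hInt ε 1)
    rw [uIcc_of_le hε.2.le] at hx
    exact G_hasDerivAt ξ x (lt_of_lt_of_le hε.1 hx.1)
  have hsplit : ∀ ε : ℝ, (∫ u in ε..1, f u) = (∫ u in (0:ℝ)..1, f u) - ∫ u in (0:ℝ)..ε, f u := by
    intro ε
    have := intervalIntegral.integral_add_adjacent_intervals (hInt 0 ε) (hInt ε 1)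
    linarith
  have hsmall : Tendsto (fun ε => ∫ u in (0:ℝ)..ε, f u) (𝓝[>] (0:ℝ)) (𝓝 0) := by
    refine squeeze_zero_norm (a := fun ε => |ε|) (fun ε => ?_) ?_
    · exact (intervalIntegral.norm_integral_le_of_norm_le_const
        (fun x _ => hbound x)).trans_eq (by simp)
    · exact (continuous_abs.tendsto' 0 0 abs_zero).mono_left nhdsWithin_le_nhds
  have htend1 : Tendsto (fun ε => ∫ u in ε..1, f u) (𝓝[>] (0:ℝ))
      (𝓝 (∫ u in (0:ℝ)..1, f u)) := by
    have := tendsto_const_nhds (x := ∫ u in (0:ℝ)..1, f u) (f := 𝓝[>] (0:ℝ)) |>.sub hsmall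
    rw [sub_zero] at this
    exact this.congr fun ε => (hsplit ε).symm
  have htend2 : Tendsto (fun ε => ∫ u in ε..1, f u) (𝓝[>] (0:ℝ)) (𝓝 (G 1)) := by
    have h := tendsto_const_nhds (x := G 1) (f := 𝓝[>] (0:ℝ)) |>.sub (G_tendsto ξ hξ)
    rw [sub_zero] at h
    refine h.congr' ?_
    filter_upwards [Ioo_mem_nhdsGT_of_mem ⟨le_refl (0:ℝ), one_pos⟩] with ε hε
    exact (hFTC ε hε).symm
  have hG1 : G 1 = Real.exp (-ξ ^ 2) - 2 * ξ * ∫ t in Ioi ξ, Real.exp (-t ^ 2) := by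
    simp [hG]
  rw [tendsto_nhds_unique htend1 htend2, hG1]


/-- The alternative integral representation (1.44): for `ξ ≥ 0`,
`Ξ(ξ) = (1/√π) ∫_0^1 e^{−ξ²/u²} du`. -/
theorem Xi_integral_representation (ξ : ℝ) (hξ : 0 ≤ ξ) :
    Xi ξ = (1 / Real.sqrt π) * ∫ u in (0:ℝ)..1, Real.exp (-ξ ^ 2 / u ^ 2) := by
  rcases hξ.eq_or_lt with h | h
  · subst h
    rw [Xi, Xi_closed_form 0 le_rfl]
    have h1 : (∫ u in (0:ℝ)..1, Real.exp (-(0:ℝ) ^ 2 / u ^ 2)) = 1 := by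
      norm_num
    rw [h1]
    norm_num
  · rw [Xi, Xi_closed_form ξ hξ, stepB ξ h, erfc_eq]
    ring
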